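/- Fix t > 0 and ν > 0. Then as x → ∞, the quotient [ (∫_0^t y^{x/ν − 1} e^{−y} dy) / Γ(x/ν) ] / [ (2πx/ν)^{−1/2} · e^{x/ν − t} · (νt/x)^{x/ν} ] tends to 1. -/

import Mathlib

open Real Filter MeasureTheory Topology Set



noncomputable def Lfun (a : ℝ) : ℝ :=
  Real.log (Real.Gamma a) - ((a - 1/2) * Real.log a - a) - Real.log (Real.sqrt (2*π))

lemma one_sub_inv_le_log {x : ℝ} (hx : 0 < x) : 1 - 1/x ≤ Real.log x := by
  have h := Real.log_le_sub_one_of_pos (x := 1/x) (by positivity)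
  rw [Real.log_div one_ne_zero (ne_of_gt hx), Real.log_one] at h
  linarith

lemma log_ratio_bounds {m : ℝ} (hm : 0 < m) :
    1/(m+1) ≤ Real.log (m+1) - Real.log m ∧ Real.log (m+1) - Real.log m ≤ 1/m := by
  have h1 : Real.log (m+1) - Real.log m = Real.log ((m+1)/m) := by
    rw [Real.log_div (by positivity) (ne_of_gt hm)]
  constructor
  · rw [h1]
    have := one_sub_inv_le_log (x := (m+1)/m) (by positivity)
    have h2 : 1 - 1/((m+1)/m) = 1/(m+1) := by field_simp; ring
    linarith [h2 ▸ this]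
  · rw [h1]
    have := Real.log_le_sub_one_of_pos (x := (m+1)/m) (by positivity)
    have h2 : (m+1)/m - 1 = 1/m := by field_simp; ring
    linarith

lemma aux_tendsto : Tendsto (fun m : ℕ => ((m:ℝ)+1/2)*(Real.log m - Real.log (m+1)))
    atTop (𝓝 (-1)) := by
  have t0 : Tendsto (fun m : ℕ => 1/(m:ℝ)) atTop (𝓝 0) := tendsto_one_div_atTop_nhds_zero_nat
  have t1 : Tendsto (fun m : ℕ => 1/((m:ℝ)+1)) atTop (𝓝 0) := by
    have := (tendsto_add_atTop_iff_nat 1).mpr t0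
    apply this.congr
    intro m; push_cast; ring_nf
  have hl : Tendsto (fun m : ℕ => -1 - (1/2)*(1/(m:ℝ))) atTop (𝓝 (-1)) := by
    have := (tendsto_const_nhds (x := (-1:ℝ)) (f := atTop (α := ℕ))).sub
      (t0.const_mul (1/2))
    simpa using this
  have hu : Tendsto (fun m : ℕ => -1 + (1/2)*(1/((m:ℝ)+1))) atTop (𝓝 (-1)) := by
    have := (tendsto_const_nhds (x := (-1:ℝ)) (f := atTop (α := ℕ))).add
      (t1.const_mul (1/2))
    simpa using this
  apply tendsto_of_tendsto_of_tendsto_of_le_of_le' hl hu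
  · filter_upwards [eventually_ge_atTop 1] with m hm
    have hm0 : (0:ℝ) < m := by exact_mod_cast hm
    have hb := (log_ratio_bounds hm0).2
    have hpos : (0:ℝ) < (m:ℝ)+1/2 := by positivity
    have := mul_le_mul_of_nonneg_left hb hpos.le
    have heq : -1 - (1/2)*(1/(m:ℝ)) = -(((m:ℝ)+1/2) * (1/m)) := by field_simp; ring
    rw [heq]
    nlinarith
  · filter_upwards [eventually_ge_atTop 1] with m hm
    have hm0 : (0:ℝ) < m := by exact_mod_cast hm
    have hb := (log_ratio_bounds hm0).1
    have hpos : (0:ℝ) < (m:ℝ)+1/2 := by positivity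
    have := mul_le_mul_of_nonneg_left hb hpos.le
    have heq : -1 + (1/2)*(1/((m:ℝ)+1)) = -(((m:ℝ)+1/2) * (1/((m:ℝ)+1))) := by
      field_simp; ring
    rw [heq]
    nlinarith

lemma stirling_nat : Tendsto (fun m : ℕ => Lfun (m+1)) atTop (𝓝 0) := by
  have hlog : Tendsto (fun m : ℕ => Real.log (Stirling.stirlingSeq m)) atTop
      (𝓝 (Real.log (Real.sqrt π))) :=
    Stirling.tendsto_stirlingSeq_sqrt_pi.log (by positivity)
  have key : ∀ m : ℕ, 1 ≤ m → Lfun (m+1) =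
      Real.log (Stirling.stirlingSeq m) + ((m:ℝ)+1/2)*(Real.log m - Real.log (m+1))
        + 1 - (1/2) * Real.log π := by
    intro m hm
    have hm0 : (0:ℝ) < m := by exact_mod_cast hm
    have hfac : (0:ℝ) < (m.factorial : ℝ) := by exact_mod_cast (Nat.factorial_pos m)
    have hs : Real.log (Stirling.stirlingSeq m) =
        Real.log (m.factorial : ℝ) - (1/2) * (Real.log 2 + Real.log m)
          - (m:ℝ) * (Real.log m - 1) := by
      rw [Stirling.stirlingSeq, Real.log_div (ne_of_gt hfac) (by positivity),
        Real.log_mul (by positivity) (by positivity), Real.log_sqrt (by positivity),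
        Real.log_mul (by norm_num) (ne_of_gt hm0), Real.log_pow,
        Real.log_div (ne_of_gt hm0) (Real.exp_ne_zero 1), Real.log_exp]
      ring
    have hG : Real.Gamma ((m:ℝ)+1) = (m.factorial : ℝ) := Real.Gamma_nat_eq_factorial m
    rw [Lfun, hG, hs, Real.log_sqrt (by positivity),
      Real.log_mul (by norm_num) (ne_of_gt Real.pi_pos)]
    ring
  have hcomb : Tendsto (fun m : ℕ => Real.log (Stirling.stirlingSeq m)
      + ((m:ℝ)+1/2)*(Real.log m - Real.log (m+1)) + 1 - (1/2) * Real.log π) atTop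
      (𝓝 (Real.log (Real.sqrt π) + -1 + 1 - (1/2) * Real.log π)) :=
    ((hlog.add aux_tendsto).add tendsto_const_nhds).sub tendsto_const_nhds
  have h2 : Real.log (Real.sqrt π) + -1 + 1 - (1/2) * Real.log π = 0 := by
    rw [Real.log_sqrt Real.pi_pos.le]; ring
  rw [h2] at hcomb
  apply hcomb.congr'
  filter_upwards [eventually_ge_atTop 1] with m hm
  rw [key m hm]

lemma stirling_nat' : Tendsto (fun n : ℕ => Lfun n) atTop (𝓝 0) := by
  rw [← tendsto_add_atTop_iff_nat 1]
  apply stirling_nat.congr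
  intro m; push_cast; ring_nf

lemma Lfun_sandwich {a : ℝ} (ha : 2 ≤ a) :
    Lfun (⌊a⌋₊ : ℝ) - 2/(⌊a⌋₊:ℝ) ≤ Lfun a ∧ Lfun a ≤ Lfun (⌊a⌋₊ : ℝ) + 2/(⌊a⌋₊:ℝ) := by
  set n := ⌊a⌋₊ with hn
  have hn2 : 2 ≤ n := Nat.le_floor (by exact_mod_cast ha)
  have hn0 : (0:ℝ) < n := by exact_mod_cast Nat.lt_of_lt_of_le two_pos hn2
  have hn1 : (1:ℝ) ≤ n := by exact_mod_cast Nat.one_le_of_lt hn2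
  have hna : (n:ℝ) ≤ a := Nat.floor_le (by linarith)
  have han : a < n+1 := Nat.lt_floor_add_one a
  have ha0 : (0:ℝ) < a := by linarith
  set θ := a - (n:ℝ) with hθ
  have hθ0 : 0 ≤ θ := by simp [hθ]; linarith
  have hθ1 : θ < 1 := by simp [hθ]; linarith
  have hGn : 0 < Real.Gamma n := Real.Gamma_pos_of_pos hn0
  have hGa : 0 < Real.Gamma a := Real.Gamma_pos_of_pos ha0
  have hGn1 : Real.log (Real.Gamma ((n:ℝ)+1)) = Real.log n + Real.log (Real.Gamma n) := by
    rw [Real.Gamma_add_one (ne_of_gt hn0), Real.log_mul (ne_of_gt hn0) (ne_of_gt hGn)]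
  have hGa1 : Real.log (Real.Gamma (a+1)) = Real.log a + Real.log (Real.Gamma a) := by
    rw [Real.Gamma_add_one (ne_of_gt ha0), Real.log_mul (ne_of_gt ha0) (ne_of_gt hGa)]
  have hcx := Real.convexOn_log_Gamma.2
  -- upper convexity bound : log Γ a ≤ log Γ n + θ log n
  have hup : Real.log (Real.Gamma a) ≤ Real.log (Real.Gamma n) + θ * Real.log n := by
    have h := hcx (x := (n:ℝ)) (mem_Ioi.mpr hn0) (y := (n:ℝ)+1) (mem_Ioi.mpr (by linarith))
      (a := 1-θ) (b := θ) (by linarith) hθ0 (by ring)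
    simp only [smul_eq_mul, Function.comp_apply] at h
    have hpt : (1-θ) * (n:ℝ) + θ * ((n:ℝ)+1) = a := by rw [hθ]; ring
    rw [hpt, hGn1] at h
    nlinarith
  -- lower convexity bound : log Γ n + log n ≤ log Γ a + (1-θ) log a
  have hlow : Real.log n + Real.log (Real.Gamma n) ≤
      Real.log (Real.Gamma a) + (1-θ) * Real.log a := by
    have h := hcx (x := a) (mem_Ioi.mpr ha0) (y := a+1) (mem_Ioi.mpr (by linarith))
      (a := θ) (b := 1-θ) hθ0 (by linarith) (by ring)
    simp only [smul_eq_mul, Function.comp_apply] at h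
    have hpt : θ * a + (1-θ) * (a+1) = (n:ℝ)+1 := by rw [hθ]; ring
    rw [hpt, hGn1, hGa1] at h
    nlinarith
  -- bounds on log a - log n
  have hlogd : Real.log a - Real.log (n:ℝ) = Real.log (a / n) := by
    rw [Real.log_div (ne_of_gt ha0) (ne_of_gt hn0)]
  have hlog_ub : Real.log a - Real.log (n:ℝ) ≤ θ / n := by
    rw [hlogd]
    have := Real.log_le_sub_one_of_pos (x := a/n) (by positivity)
    have h2 : a/(n:ℝ) - 1 = θ/n := by field_simp; rw [hθ]
    linarith
  have hlog_lb : θ / a ≤ Real.log a - Real.log (n:ℝ) := by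
    rw [hlogd]
    have := one_sub_inv_le_log (x := a/n) (by positivity)
    have h2 : 1 - 1/(a/(n:ℝ)) = θ/a := by field_simp; rw [hθ]
    linarith
  have hd1 : ((n:ℝ)+1/2)*(Real.log a - Real.log n) ≤ (a - n) + 2/(n:ℝ) := by
    have h1 := mul_le_mul_of_nonneg_left hlog_ub (show (0:ℝ) ≤ (n:ℝ)+1/2 by positivity)
    have h2 : ((n:ℝ)+1/2)*(θ/n) = θ + θ/(2*n) := by field_simp
    have h3 : θ/(2*(n:ℝ)) ≤ 2/(n:ℝ) := by
      rw [div_le_div_iff₀ (by positivity) hn0]; nlinarith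
    rw [hθ] at h1
    linarith
  have hd2 : (a - n) - 2/(n:ℝ) ≤ (a - 1/2)*(Real.log a - Real.log n) := by
    have h1 := mul_le_mul_of_nonneg_left hlog_lb (show (0:ℝ) ≤ a - 1/2 by linarith)
    have h2 : (a-1/2)*(θ/a) = θ - θ/(2*a) := by field_simp
    have h3 : θ/(2*a) ≤ 2/(n:ℝ) := by
      rw [div_le_div_iff₀ (by positivity) hn0]; nlinarith
    rw [hθ] at h1
    linarith
  rw [hθ] at hup hlow
  constructor
  · simp only [Lfun]
    linarith [hlow, hd1]
  · simp only [Lfun]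
    linarith [hup, hd2]


lemma exp_neg_le {t y : ℝ} (hy : 0 < y) (hyt : y ≤ t) :
    Real.exp (-y) ≤ Real.exp (-t) + (t - y) := by
  have h2 := Real.add_one_le_exp (y - t)
  have h4 : Real.exp (-y) * Real.exp (y - t) = Real.exp (-t) := by
    rw [← Real.exp_add]; ring_nf
  have h3 : Real.exp (-y) ≤ 1 := Real.exp_le_one_iff.mpr (by linarith)
  nlinarith [mul_le_mul_of_nonneg_left h2 (Real.exp_pos (-y)).le]

lemma integral_rpow_Ioc {t r : ℝ} (ht : 0 < t) (hr : -1 < r) :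
    ∫ y in Ioc (0:ℝ) t, y ^ r = t ^ (r+1) / (r+1) := by
  rw [← intervalIntegral.integral_of_le ht.le, integral_rpow (Or.inl hr)]
  rw [Real.zero_rpow (by linarith)]
  ring

lemma I_bounds {t a : ℝ} (ht : 0 < t) (ha : 1 < a) :
    Real.exp (-t) * (t ^ a / a) ≤ (∫ y in Ioc (0:ℝ) t, y ^ (a-1) * Real.exp (-y)) ∧
    (∫ y in Ioc (0:ℝ) t, y ^ (a-1) * Real.exp (-y)) ≤
      Real.exp (-t) * (t ^ a / a) + t ^ a * t / (a*(a+1)) := by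
  have ha0 : (0:ℝ) < a := by linarith
  have hIf : IntegrableOn (fun y : ℝ => y ^ (a-1) * Real.exp (-y)) (Ioc 0 t) := by
    have := (Real.GammaIntegral_convergent ha0).mono_set (Ioc_subset_Ioi_self : Ioc (0:ℝ) t ⊆ Ioi 0)
    exact this.congr_fun (fun y _ => by ring) measurableSet_Ioc
  have hIr : IntegrableOn (fun y : ℝ => y ^ (a-1)) (Ioc 0 t) :=
    (intervalIntegral.intervalIntegrable_rpow' (by linarith)).1
  have hIr2 : IntegrableOn (fun y : ℝ => y ^ a) (Ioc 0 t) :=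
    (intervalIntegral.intervalIntegrable_rpow' (by linarith)).1
  have hXr : ∫ y in Ioc (0:ℝ) t, y ^ (a-1) = t ^ a / a := by
    have := integral_rpow_Ioc ht (r := a - 1) (by linarith)
    simpa using this
  have hXr2 : ∫ y in Ioc (0:ℝ) t, y ^ a = t ^ a * t / (a+1) := by
    have := integral_rpow_Ioc ht (r := a) (by linarith)
    rw [this, Real.rpow_add ht, Real.rpow_one]
  have hIl : IntegrableOn (fun y : ℝ => Real.exp (-t) * y ^ (a-1)) (Ioc 0 t) :=
    hIr.const_mul _
  have hIu1 : IntegrableOn (fun y : ℝ => Real.exp (-t) * y ^ (a-1) + t * y ^ (a-1))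
      (Ioc 0 t) := hIl.add (hIr.const_mul _)
  constructor
  · have h := setIntegral_mono_on hIl hIf measurableSet_Ioc ?_
    · rw [MeasureTheory.integral_const_mul, hXr] at h
      exact h
    · intro y hy
      rw [mul_comm]
      apply mul_le_mul_of_nonneg_left (Real.exp_le_exp.mpr (by linarith [hy.2]))
        (Real.rpow_nonneg hy.1.le _)
  · have hIu : IntegrableOn
        (fun y : ℝ => Real.exp (-t) * y ^ (a-1) + t * y ^ (a-1) - y ^ a) (Ioc 0 t) :=
      hIu1.sub hIr2
    have h := setIntegral_mono_on hIf hIu measurableSet_Ioc ?_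
    · rw [MeasureTheory.integral_sub hIu1 hIr2, MeasureTheory.integral_add hIl (hIr.const_mul t),
        MeasureTheory.integral_const_mul, MeasureTheory.integral_const_mul, hXr, hXr2] at h
      calc (∫ y in Ioc (0:ℝ) t, y ^ (a-1) * Real.exp (-y)) ≤
          Real.exp (-t) * (t ^ a / a) + t * (t ^ a / a) - t ^ a * t / (a+1) := h
        _ = Real.exp (-t) * (t ^ a / a) + t ^ a * t / (a*(a+1)) := by field_simp; ring
    · intro y hy
      have hy0 := hy.1
      have hyt := hy.2
      have hrp : (0:ℝ) ≤ y ^ (a-1) := Real.rpow_nonneg hy0.le _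
      have he := exp_neg_le hy0 hyt
      have hya : y ^ (a-1) * y = y ^ a := by
        rw [← Real.rpow_add_one (ne_of_gt hy0)]; ring_nf
      nlinarith [mul_le_mul_of_nonneg_left he hrp]

lemma stirling_real : Tendsto Lfun atTop (𝓝 0) := by
  have hfl : Tendsto (fun a : ℝ => Lfun (⌊a⌋₊ : ℝ)) atTop (𝓝 0) :=
    stirling_nat'.comp tendsto_nat_floor_atTop
  have hinv : Tendsto (fun a : ℝ => 2/(⌊a⌋₊:ℝ)) atTop (𝓝 0) := by
    have h : Tendsto (fun n : ℕ => 2/(n:ℝ)) atTop (𝓝 0) := by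
      simpa using tendsto_const_div_atTop_nhds_zero_nat 2
    exact h.comp tendsto_nat_floor_atTop
  have hlo := hfl.sub hinv
  have hhi := hfl.add hinv
  rw [show (0:ℝ) - 0 = 0 by ring] at hlo
  rw [show (0:ℝ) + 0 = 0 by ring] at hhi
  apply tendsto_of_tendsto_of_tendsto_of_le_of_le' hlo hhi
  · filter_upwards [eventually_ge_atTop 2] with a ha
    exact (Lfun_sandwich ha).1
  · filter_upwards [eventually_ge_atTop 2] with a ha
    exact (Lfun_sandwich ha).2

lemma A_tendsto {t : ℝ} (ht : 0 < t) :
    Tendsto (fun a : ℝ =>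
      (∫ y in Ioc (0:ℝ) t, y ^ (a-1) * Real.exp (-y)) * a * Real.exp t / t ^ a)
      atTop (𝓝 1) := by
  have hhi : Tendsto (fun a : ℝ => 1 + Real.exp t * t / (a+1)) atTop (𝓝 1) := by
    have h : Tendsto (fun a : ℝ => Real.exp t * t / (a+1)) atTop (𝓝 0) :=
      tendsto_const_nhds.div_atTop (tendsto_atTop_add_const_right _ 1 tendsto_id)
    simpa using (tendsto_const_nhds (x := (1:ℝ))).add h
  apply tendsto_of_tendsto_of_tendsto_of_le_of_le' tendsto_const_nhds hhi
  · filter_upwards [eventually_gt_atTop 1] with a ha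
    have ha0 : (0:ℝ) < a := by linarith
    have hta : (0:ℝ) < t ^ a := Real.rpow_pos_of_pos ht a
    have hIb := (I_bounds ht ha).1
    have key : Real.exp (-t) * (t ^ a / a) * a * Real.exp t / t ^ a = 1 := by
      rw [Real.exp_neg]
      field_simp
    calc (1:ℝ) = Real.exp (-t) * (t ^ a / a) * a * Real.exp t / t ^ a := key.symm
      _ ≤ _ := by gcongr
  · filter_upwards [eventually_gt_atTop 1] with a ha
    have ha0 : (0:ℝ) < a := by linarith
    have hta : (0:ℝ) < t ^ a := Real.rpow_pos_of_pos ht a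
    have hIb := (I_bounds ht ha).2
    have key : (Real.exp (-t) * (t ^ a / a) + t ^ a * t / (a*(a+1))) * a * Real.exp t / t ^ a
        = 1 + Real.exp t * t / (a+1) := by
      rw [Real.exp_neg]
      field_simp
    calc (∫ y in Ioc (0:ℝ) t, y ^ (a-1) * Real.exp (-y)) * a * Real.exp t / t ^ a
        ≤ (Real.exp (-t) * (t ^ a / a) + t ^ a * t / (a*(a+1))) * a * Real.exp t / t ^ a := by
          gcongr
      _ = 1 + Real.exp t * t / (a+1) := key

/-- Tail asymptotics of the inverse gamma process: for fixed `t > 0` and `ν > 0`,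
`γ(x/ν, t)/Γ(x/ν) ∼ (2πx/ν)^{−1/2} e^{x/ν − t} (νt/x)^{x/ν}` as `x → ∞`. -/
theorem inverse_gamma_tail_asymptotic (t ν : ℝ) (ht : 0 < t) (hν : 0 < ν) :
    Tendsto (fun x : ℝ =>
      ((∫ y in Set.Ioc (0 : ℝ) t, y ^ (x / ν - 1) * Real.exp (-y)) / Real.Gamma (x / ν)) /
        ((2 * π * x / ν) ^ (-(1 / 2) : ℝ) * Real.exp (x / ν - t) * (ν * t / x) ^ (x / ν)))
      atTop (nhds 1) := by
  have hG : Tendsto (fun a : ℝ =>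
      ((∫ y in Ioc (0:ℝ) t, y ^ (a-1) * Real.exp (-y)) * a * Real.exp t / t ^ a)
        * Real.exp (-(Lfun a))) atTop (𝓝 1) := by
    have h2 : Tendsto (fun a => Real.exp (-(Lfun a))) atTop (𝓝 (Real.exp (-0))) :=
      (Real.continuous_exp.tendsto _).comp stirling_real.neg
    rw [show Real.exp (-0) = 1 by simp] at h2
    simpa using (A_tendsto ht).mul h2
  have hcomp : Tendsto (fun x : ℝ => x / ν) atTop atTop :=
    tendsto_id.atTop_div_const hν
  have := hG.comp hcomp
  apply this.congr'
  filter_upwards [eventually_ge_atTop (max (2*ν) 1)] with x hx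
  have hx1 : (1:ℝ) ≤ x := le_trans (le_max_right _ _) hx
  have hx0 : (0:ℝ) < x := by linarith
  have ha2 : (2:ℝ) ≤ x / ν := by
    rw [le_div_iff₀ hν]
    calc (2:ℝ) * ν ≤ max (2*ν) 1 := le_max_left _ _
      _ ≤ x := hx
  set a := x / ν with hadef
  have ha0 : (0:ℝ) < a := by linarith
  have hGa : 0 < Real.Gamma a := Real.Gamma_pos_of_pos ha0
  have hta : (0:ℝ) < t ^ a := Real.rpow_pos_of_pos ht a
  have haa : (0:ℝ) < a ^ a := Real.rpow_pos_of_pos ha0 a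
  have hsq : (0:ℝ) < Real.sqrt (2*π) := Real.sqrt_pos.mpr (by positivity)
  have hah : (0:ℝ) < a ^ (1/2 : ℝ) := Real.rpow_pos_of_pos ha0 _
  -- rewrite the two composite arguments
  have e1 : 2 * π * x / ν = 2 * π * a := by rw [hadef]; ring
  have e2 : ν * t / x = t / a := by rw [hadef]; field_simp
  clear_value a
  have key : Real.Gamma a * ((2*π*a) ^ (-(1/2):ℝ) * Real.exp (a-t) * (t/a) ^ a) *
      (Real.exp t * Real.exp (-(Lfun a))) = t ^ a / a := by
    rw [← Real.exp_log hGa, Real.rpow_def_of_pos (show (0:ℝ) < 2*π*a by positivity),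
      Real.rpow_def_of_pos (show (0:ℝ) < t/a by positivity),
      show t ^ a / a = Real.exp (Real.log t * a - Real.log a) from by
        rw [Real.exp_sub, ← Real.rpow_def_of_pos ht, Real.exp_log ha0]]
    simp only [← Real.exp_add, ← Real.exp_sub]
    congr 1
    rw [Lfun, Real.log_div (ne_of_gt ht) (ne_of_gt ha0),
      Real.log_mul (by positivity) (ne_of_gt ha0), Real.log_sqrt (by positivity)]
    ring
  have hD0 : Real.Gamma a * ((2*π*a) ^ (-(1/2):ℝ) * Real.exp (a-t) * (t/a) ^ a) ≠ 0 := by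
    positivity
  simp only [Function.comp, ← hadef, e1, e2]
  rw [div_div, eq_comm, div_eq_iff hD0]
  rw [eq_div_iff (ne_of_gt ha0)] at key
  rw [← key]
  field_simp
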